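/- For every real h with 0 < h ≤ π/2, the coefficients a₄ = (3 + 9cos h)/(4cos(h/2) - 4cos(5h/2)) and a₅ = -3cot²(h/2)/(2 + 4cos h) satisfy a₄ > 0 and 2a₄ + a₅ ≤ 0; consequently 2a₄ cos θ + a₅ ≤ 0 for every real θ. -/

import Mathlib

open Real

set_option maxHeartbeats 1000000 in
/-- For `0 < h ≤ π/2`, the B-spline second-derivative coefficients
`a₄ = (3 + 9 cos h)/(4 cos(h/2) - 4 cos(5h/2))` and
`a₅ = -3 cot²(h/2)/(2 + 4 cos h)` satisfy `a₄ > 0` and `2 a₄ + a₅ ≤ 0`;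
consequently `2 a₄ cos θ + a₅ ≤ 0` for every real `θ`. -/
theorem symbol_second_deriv_nonpos (h : ℝ) (h0 : 0 < h) (h1 : h ≤ π / 2)
    (a₄ a₅ : ℝ)
    (ha₄ : a₄ = (3 + 9 * Real.cos h) / (4 * Real.cos (h / 2) - 4 * Real.cos (5 * h / 2)))
    (ha₅ : a₅ = -(3 * (Real.cos (h / 2) / Real.sin (h / 2)) ^ 2) / (2 + 4 * Real.cos h)) :
    0 < a₄ ∧ 2 * a₄ + a₅ ≤ 0 ∧ ∀ θ : ℝ, 2 * a₄ * Real.cos θ + a₅ ≤ 0 := by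
  have hpi := Real.pi_pos
  set s := Real.sin (h/2) with hs
  set c := Real.cos (h/2) with hc
  have hs0 : 0 < s := Real.sin_pos_of_pos_of_lt_pi (by linarith) (by linarith)
  have hc0 : 0 < c := Real.cos_pos_of_mem_Ioo ⟨by linarith, by linarith⟩
  have pyth : s ^ 2 + c ^ 2 = 1 := Real.sin_sq_add_cos_sq _
  have cosh : Real.cos h = 1 - 2 * s ^ 2 := by
    rw [show h = 2 * (h / 2) by ring, Real.cos_two_mul]; linarith
  have hch : 0 ≤ Real.cos h :=
    Real.cos_nonneg_of_mem_Icc ⟨by linarith, h1⟩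
  have hs2 : s ^ 2 ≤ 1 / 2 := by rw [cosh] at hch; linarith
  have hD : 4 * c - 4 * Real.cos (5 * h / 2) = 16 * s ^ 2 * c * (3 - 4 * s ^ 2) := by
    rw [show 5 * h / 2 = 2 * (h / 2) + 3 * (h / 2) by ring, Real.cos_add,
      Real.cos_two_mul, Real.sin_two_mul, Real.cos_three_mul, Real.sin_three_mul]
    linear_combination (-32 * c ^ 3 + 8 * c + 32 * s ^ 2 * c) * pyth
  have hDpos : (0 : ℝ) < 16 * s ^ 2 * c * (3 - 4 * s ^ 2) := by
    have h1' : 0 < s ^ 2 := by positivity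
    have h2' : 0 < 3 - 4 * s ^ 2 := by nlinarith
    positivity
  have ha₄' : a₄ = (12 - 18 * s ^ 2) / (16 * s ^ 2 * c * (3 - 4 * s ^ 2)) := by
    rw [ha₄, cosh, hD]; ring
  have ha₄pos : 0 < a₄ := by
    rw [ha₄']
    exact div_pos (by nlinarith) hDpos
  have hsne : s ≠ 0 := ne_of_gt hs0
  have hcne : c ≠ 0 := ne_of_gt hc0
  have h34 : (3 : ℝ) - 4 * s ^ 2 ≠ 0 := by nlinarith
  have ha₅' : a₅ = -(3 * c ^ 2) / (2 * s ^ 2 * (3 - 4 * s ^ 2)) := by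
    rw [ha₅, cosh]
    have h6 : (2 : ℝ) + 4 * (1 - 2 * s ^ 2) ≠ 0 := by nlinarith
    field_simp
    rw [show (2:ℝ) + 4 * (1 - s ^ 2 * 2) = 2 * (3 - s ^ 2 * 4) by ring, div_mul_cancel_left₀ two_ne_zero, one_div]
  have key : 2 - 3 * s ^ 2 - 2 * c ^ 3 ≤ 0 := by
    have hc2 : c ^ 2 = 1 - s ^ 2 := by linarith
    have hcc : c ^ 3 * c ^ 3 = (1 - s ^ 2) ^ 3 := by
      rw [show c ^ 3 * c ^ 3 = (c ^ 2) ^ 3 by ring, hc2]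
    have h4 : (2 * c ^ 3 - (2 - 3 * s ^ 2)) * (2 * c ^ 3 + (2 - 3 * s ^ 2)) =
        s ^ 4 * (3 - 4 * s ^ 2) := by linear_combination 4 * hcc
    have hpos : 0 < 2 * c ^ 3 + (2 - 3 * s ^ 2) := by nlinarith [pow_pos hc0 3]
    have hnn : 0 ≤ s ^ 4 * (3 - 4 * s ^ 2) := by nlinarith [sq_nonneg (s ^ 2)]
    nlinarith [h4, hpos, hnn]
  have hsum : 2 * a₄ + a₅ = 3 * (2 - 3 * s ^ 2 - 2 * c ^ 3) / (4 * s ^ 2 * c * (3 - 4 * s ^ 2)) := by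
    rw [ha₄', ha₅']
    field_simp
    ring
  have hsum_le : 2 * a₄ + a₅ ≤ 0 := by
    rw [hsum]
    apply div_nonpos_of_nonpos_of_nonneg
    · nlinarith
    · nlinarith
  refine ⟨ha₄pos, hsum_le, fun θ => ?_⟩
  nlinarith [Real.cos_le_one θ, ha₄pos]
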